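/- For every positive rational number r, there exists a finite simple undirected graph Γ = (V, E) such that |Aut(Γ)| / (|V| + |E|) = r. -/

import Mathlib

set_option linter.unusedSectionVars false


namespace AutRatio
open Finset

variable (j s d₁ d₂ d₃ : ℕ)

/-- multiplicity of weight `b` -/
def mlt (b : ℕ) : ℕ :=
  1 + (if b = s then j - 1 else 0) + (if b ∈ ({d₁, d₂, d₃} : Finset ℕ) then 1 else 0)

abbrev Vtx : Type := (a : Fin (2*s)) × Fin (mlt j s d₁ d₂ d₃ (a.1+1))

def Gr : SimpleGraph (Vtx j s d₁ d₂ d₃) where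
  Adj x y := x ≠ y ∧ 2*s < (x.1.1+1) + (y.1.1+1)
  symm := ⟨by intro x y ⟨h1, h2⟩; exact ⟨h1.symm, by omega⟩⟩
  loopless := ⟨fun x h => h.1 rfl⟩

instance : DecidableRel (Gr j s d₁ d₂ d₃).Adj :=
  fun x y => inferInstanceAs (Decidable (x ≠ y ∧ 2*s < (x.1.1+1) + (y.1.1+1)))

def cnt (v : ℕ) : ℕ := ∑ b ∈ Finset.Ioc v (2*s), mlt j s d₁ d₂ d₃ b

def Dfun (a : ℕ) : ℕ := cnt j s d₁ d₂ d₃ (2*s - a) - (if s < a then 1 else 0)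

lemma card3_le : #({d₁, d₂, d₃} : Finset ℕ) ≤ 3 := by
  refine le_trans (Finset.card_insert_le _ _) ?_
  have h2 := Finset.card_insert_le d₂ ({d₃} : Finset ℕ)
  simp only [Finset.card_singleton] at h2
  omega

section hyps
variable (hj : 9 ≤ j) (hs : j + 14 ≤ s) (h1 : 1 ≤ d₁) (h12 : d₁ < d₂) (h23 : d₂ < d₃)
  (h3 : d₃ + 1 ≤ s)

include hj hs h1 h12 h23 h3

lemma cnt_eq (v : ℕ) :
    cnt j s d₁ d₂ d₃ v = (2*s - v) + (if v < s then j - 1 else 0)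
      + #(({d₁, d₂, d₃} : Finset ℕ).filter (fun d => v < d)) := by
  unfold cnt mlt
  rw [Finset.sum_add_distrib, Finset.sum_add_distrib]
  congr 1
  · congr 1
    · simp [Nat.card_Ioc]
    · rw [Finset.sum_ite_eq' (Finset.Ioc v (2*s)) s (fun _ => j - 1)]
      congr 1
      simp only [Finset.mem_Ioc, eq_iff_iff]
      omega
  · rw [Finset.sum_ite_mem]
    rw [Finset.sum_const, smul_eq_mul, mul_one]
    congr 1
    ext b
    simp only [Finset.mem_inter, Finset.mem_Ioc, Finset.mem_filter, Finset.mem_insert,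
      Finset.mem_singleton]
    constructor
    · rintro ⟨⟨hb1, hb2⟩, hb3⟩; exact ⟨hb3, hb1⟩
    · rintro ⟨hb3, hb1⟩; exact ⟨⟨hb1, by omega⟩, hb3⟩

lemma cnt_high {v : ℕ} (hv : s ≤ v) : cnt j s d₁ d₂ d₃ v = 2*s - v := by
  rw [cnt_eq j s d₁ d₂ d₃ hj hs h1 h12 h23 h3 v]
  have : #(({d₁, d₂, d₃} : Finset ℕ).filter (fun d => v < d)) = 0 := by
    rw [Finset.card_eq_zero, Finset.filter_eq_empty_iff]
    intro d hd
    simp only [Finset.mem_insert, Finset.mem_singleton] at hd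
    omega
  rw [this]
  simp only [if_neg (by omega : ¬ v < s)]
  omega

lemma Dfun_low {a : ℕ} (ha : 1 ≤ a) (ha' : a + 1 ≤ s) : Dfun j s d₁ d₂ d₃ a = a := by
  unfold Dfun
  rw [cnt_high j s d₁ d₂ d₃ hj hs h1 h12 h23 h3 (by omega)]
  simp only [if_neg (by omega : ¬ s < a)]
  omega

lemma Dfun_mid : Dfun j s d₁ d₂ d₃ s = s := by
  unfold Dfun
  rw [cnt_high j s d₁ d₂ d₃ hj hs h1 h12 h23 h3 (by omega)]
  simp only [if_neg (by omega : ¬ s < s)]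
  omega

lemma Dfun_high {a : ℕ} (ha : s < a) (ha' : a ≤ 2*s) :
    Dfun j s d₁ d₂ d₃ a
      = a + j - 2 + #(({d₁, d₂, d₃} : Finset ℕ).filter (fun d => 2*s - a < d)) := by
  unfold Dfun
  rw [cnt_eq j s d₁ d₂ d₃ hj hs h1 h12 h23 h3]
  simp only [if_pos (by omega : 2*s - a < s), if_pos ha]
  have hcard : #(({d₁, d₂, d₃} : Finset ℕ).filter (fun d => 2*s - a < d)) ≤ 3 :=
    le_trans (Finset.card_filter_le _ _) (card3_le d₁ d₂ d₃)
  omega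

lemma Dfun_inj {a b : ℕ} (ha : 1 ≤ a) (ha' : a ≤ 2*s) (hb : 1 ≤ b) (hb' : b ≤ 2*s)
    (h : Dfun j s d₁ d₂ d₃ a = Dfun j s d₁ d₂ d₃ b) : a = b := by
  have key : ∀ c, 1 ≤ c → c ≤ 2*s → (c ≤ s → Dfun j s d₁ d₂ d₃ c = c) := by
    intro c hc1 hc2 hc3
    rcases Nat.lt_or_ge c s with hcs | hcs
    · exact Dfun_low j s d₁ d₂ d₃ hj hs h1 h12 h23 h3 hc1 (by omega)
    · have : c = s := by omega
      rw [this]; exact Dfun_mid j s d₁ d₂ d₃ hj hs h1 h12 h23 h3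
  -- monotonicity of the filter-card in a
  have emono : ∀ {x y : ℕ}, x ≤ y →
      #(({d₁, d₂, d₃} : Finset ℕ).filter (fun d => 2*s - x < d)) ≤
      #(({d₁, d₂, d₃} : Finset ℕ).filter (fun d => 2*s - y < d)) := by
    intro x y hxy
    apply Finset.card_le_card
    apply Finset.monotone_filter_right
    intro d hd
    omega
  have ecard : ∀ x, #(({d₁, d₂, d₃} : Finset ℕ).filter (fun d => 2*s - x < d)) ≤ 3 :=
    fun x => le_trans (Finset.card_filter_le _ _) (card3_le d₁ d₂ d₃)
  rcases le_or_gt a s with has | has <;> rcases le_or_gt b s with hbs | hbs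
  · rw [key a ha ha' has, key b hb hb' hbs] at h; exact h
  · rw [key a ha ha' has, Dfun_high j s d₁ d₂ d₃ hj hs h1 h12 h23 h3 hbs hb'] at h
    have := ecard b; omega
  · rw [key b hb hb' hbs, Dfun_high j s d₁ d₂ d₃ hj hs h1 h12 h23 h3 has ha'] at h
    have := ecard a; omega
  · rw [Dfun_high j s d₁ d₂ d₃ hj hs h1 h12 h23 h3 has ha',
      Dfun_high j s d₁ d₂ d₃ hj hs h1 h12 h23 h3 hbs hb'] at h
    rcases Nat.lt_trichotomy a b with hab | hab | hab
    · have := emono (le_of_lt hab); have := ecard a; have := ecard b; omega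
    · exact hab
    · have := emono (le_of_lt hab); have := ecard a; have := ecard b; omega

end hyps

-- generic fiber-count lemma
lemma card_filter_fst (hs1 : 1 ≤ s) (P : ℕ → Prop) [DecidablePred P] :
    #(Finset.univ.filter (fun y : Vtx j s d₁ d₂ d₃ => P (y.1.1+1)))
      = ∑ b ∈ (Finset.Ioc 0 (2*s)).filter P, mlt j s d₁ d₂ d₃ b := by
  have h1 : (Finset.univ : Finset (Vtx j s d₁ d₂ d₃))
      = (Finset.univ : Finset (Fin (2*s))).sigma (fun _ => Finset.univ) :=
    (Finset.univ_sigma_univ).symm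
  rw [h1]
  have h2 : ((Finset.univ : Finset (Fin (2*s))).sigma (fun _ => Finset.univ)).filter
        (fun y : Vtx j s d₁ d₂ d₃ => P (y.1.1+1))
      = ((Finset.univ : Finset (Fin (2*s))).filter (fun a => P (a.1+1))).sigma
        (fun _ => Finset.univ) := by
    ext ⟨a, k⟩
    simp [Finset.mem_sigma, Finset.mem_filter]
  rw [h2, Finset.card_sigma]
  rw [Finset.sum_nbij' (i := fun a : Fin (2*s) => a.1+1)
    (j := fun b : ℕ => (⟨min (b-1) (2*s-1), by omega⟩ : Fin (2*s)))]
  · intro a ha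
    simp only [Finset.mem_filter, Finset.mem_univ, true_and] at ha
    simp only [Finset.mem_filter, Finset.mem_Ioc]
    exact ⟨⟨by omega, by omega⟩, ha⟩
  · intro b hb
    simp only [Finset.mem_filter, Finset.mem_Ioc] at hb
    simp only [Finset.mem_filter, Finset.mem_univ, true_and]
    have : min (b-1) (2*s-1) + 1 = b := by omega
    rw [this]
    exact hb.2
  · intro a ha
    have := a.2
    exact Fin.ext (by simp; omega)
  · intro b hb
    simp only [Finset.mem_filter, Finset.mem_Ioc] at hb
    show min (b-1) (2*s-1) + 1 = b
    omega
  · intro a ha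
    simp [Finset.card_univ]

section hyps2
variable (hj : 9 ≤ j) (hs : j + 14 ≤ s) (h1 : 1 ≤ d₁) (h12 : d₁ < d₂) (h23 : d₂ < d₃)
  (h3 : d₃ + 1 ≤ s)

include hj hs h1 h12 h23 h3

lemma degree_eq (x : Vtx j s d₁ d₂ d₃) :
    (Gr j s d₁ d₂ d₃).degree x = Dfun j s d₁ d₂ d₃ (x.1.1+1) := by
  classical
  rw [← SimpleGraph.card_neighborFinset_eq_degree, SimpleGraph.neighborFinset_eq_filter]
  have hAdj : (Finset.univ.filter ((Gr j s d₁ d₂ d₃).Adj x))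
      = (Finset.univ.filter (fun y : Vtx j s d₁ d₂ d₃ =>
          2*s < (x.1.1+1) + (y.1.1+1))).erase x := by
    ext y
    simp only [Finset.mem_filter, Finset.mem_univ, true_and, Finset.mem_erase]
    show (x ≠ y ∧ _) ↔ _
    constructor
    · rintro ⟨hne, hlt⟩; exact ⟨hne.symm, hlt⟩
    · rintro ⟨hne, hlt⟩; exact ⟨hne.symm, hlt⟩
  rw [hAdj]
  have hcf := card_filter_fst j s d₁ d₂ d₃ (by omega) (fun b => 2*s < (x.1.1+1) + b)
  have hIoc : (Finset.Ioc 0 (2*s)).filter (fun b => 2*s < (x.1.1+1) + b)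
      = Finset.Ioc (2*s - (x.1.1+1)) (2*s) := by
    ext b
    simp only [Finset.mem_filter, Finset.mem_Ioc]
    omega
  rw [hIoc] at hcf
  by_cases hx : s < x.1.1 + 1
  · rw [Finset.card_erase_of_mem]
    · rw [hcf]
      unfold Dfun
      rw [if_pos hx]
      rfl
    · simp only [Finset.mem_filter, Finset.mem_univ, true_and]
      have := x.1.2
      omega
  · rw [Finset.erase_eq_of_notMem]
    · rw [hcf]
      unfold Dfun
      rw [if_neg hx]
      rfl
    · simp only [Finset.mem_filter, Finset.mem_univ, true_and]
      omega

lemma card_Vtx : Fintype.card (Vtx j s d₁ d₂ d₃) = 2*s + j + 2 := by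
  classical
  have := card_filter_fst j s d₁ d₂ d₃ (by omega) (fun _ => True)
  simp only [Finset.filter_true, Finset.filter_true_of_mem (fun _ _ => trivial)] at this
  rw [← Finset.card_univ, this]
  have : ∑ b ∈ Finset.Ioc 0 (2*s), mlt j s d₁ d₂ d₃ b = cnt j s d₁ d₂ d₃ 0 := rfl
  rw [this, cnt_eq j s d₁ d₂ d₃ hj hs h1 h12 h23 h3 0]
  have hf : ({d₁, d₂, d₃} : Finset ℕ).filter (fun d => 0 < d) = {d₁, d₂, d₃} := by
    apply Finset.filter_true_of_mem
    intro d hd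
    simp only [Finset.mem_insert, Finset.mem_singleton] at hd
    omega
  rw [hf]
  have hc : #({d₁, d₂, d₃} : Finset ℕ) = 3 := by
    rw [Finset.card_insert_of_notMem, Finset.card_insert_of_notMem, Finset.card_singleton]
    · simp only [Finset.mem_singleton]; omega
    · simp only [Finset.mem_insert, Finset.mem_singleton]
      push_neg
      omega
  rw [hc, if_pos (by omega : 0 < s)]
  omega

end hyps2

lemma Vtx.ext2 {x y : Vtx j s d₁ d₂ d₃} (hfst : x.1 = y.1) (hsnd : x.2.1 = y.2.1) :
    x = y := by
  rcases x with ⟨a, k⟩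
  rcases y with ⟨b, m⟩
  dsimp at hfst
  subst hfst
  dsimp at hsnd
  exact congrArg (Sigma.mk a) (Fin.ext hsnd)

lemma iso_degree (φ : Gr j s d₁ d₂ d₃ ≃g Gr j s d₁ d₂ d₃) (x : Vtx j s d₁ d₂ d₃) :
    (Gr j s d₁ d₂ d₃).degree (φ x) = (Gr j s d₁ d₂ d₃).degree x := by
  classical
  rw [← SimpleGraph.card_neighborSet_eq_degree, ← SimpleGraph.card_neighborSet_eq_degree]
  exact (Fintype.card_congr (φ.mapNeighborSet x)).symm

lemma fst_pres (hj : 9 ≤ j) (hs : j + 14 ≤ s) (h1 : 1 ≤ d₁) (h12 : d₁ < d₂) (h23 : d₂ < d₃)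
    (h3 : d₃ + 1 ≤ s) (φ : Gr j s d₁ d₂ d₃ ≃g Gr j s d₁ d₂ d₃) (x : Vtx j s d₁ d₂ d₃) :
    (φ x).1 = x.1 := by
  have hdeg := iso_degree j s d₁ d₂ d₃ φ x
  rw [degree_eq j s d₁ d₂ d₃ hj hs h1 h12 h23 h3,
    degree_eq j s d₁ d₂ d₃ hj hs h1 h12 h23 h3] at hdeg
  have hb1 := (φ x).1.2
  have hb2 := x.1.2
  have := Dfun_inj j s d₁ d₂ d₃ hj hs h1 h12 h23 h3
    (a := (φ x).1.1+1) (b := x.1.1+1) (by omega) (by omega) (by omega) (by omega) hdeg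
  exact Fin.ext (by omega)

/-- the graph automorphisms are exactly the fiber-preserving permutations -/
def autEquivSub (hj : 9 ≤ j) (hs : j + 14 ≤ s) (h1 : 1 ≤ d₁) (h12 : d₁ < d₂) (h23 : d₂ < d₃)
    (h3 : d₃ + 1 ≤ s) :
    (Gr j s d₁ d₂ d₃ ≃g Gr j s d₁ d₂ d₃) ≃
      {σ : Equiv.Perm (Vtx j s d₁ d₂ d₃) // ∀ x, (σ x).1 = x.1} where
  toFun φ := ⟨φ.toEquiv, fun x => fst_pres j s d₁ d₂ d₃ hj hs h1 h12 h23 h3 φ x⟩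
  invFun σ :=
    { toEquiv := σ.1
      map_rel_iff' := by
        intro a b
        show (σ.1 a ≠ σ.1 b ∧ 2*s < ((σ.1 a).1.1+1) + ((σ.1 b).1.1+1)) ↔ _
        rw [σ.2 a, σ.2 b, ne_eq, Equiv.apply_eq_iff_eq]
        rfl }
  left_inv φ := rfl
  right_inv σ := rfl

def Phi (π : ∀ a : Fin (2*s), Equiv.Perm (Fin (mlt j s d₁ d₂ d₃ (a.1+1)))) :
    {σ : Equiv.Perm (Vtx j s d₁ d₂ d₃) // ∀ x, (σ x).1 = x.1} :=
  ⟨Equiv.sigmaCongrRight π, fun _ => rfl⟩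

lemma Phi_bij : Function.Bijective (Phi j s d₁ d₂ d₃) := by
  constructor
  · intro π π' h
    funext a
    ext k
    have h2 := congrArg (fun σ => ((σ.1 ⟨a, k⟩ : Vtx j s d₁ d₂ d₃).2 : ℕ)) h
    exact h2
  · rintro ⟨σ, hσ⟩
    have hσ' : ∀ x : Vtx j s d₁ d₂ d₃, (σ.symm x).1 = x.1 := by
      intro x
      conv_rhs => rw [← σ.apply_symm_apply x]
      rw [hσ]
    have cast1 : ∀ (a : Fin (2*s)) (k : Fin (mlt j s d₁ d₂ d₃ (a.1+1))),
        mlt j s d₁ d₂ d₃ ((σ ⟨a, k⟩).1.1+1) = mlt j s d₁ d₂ d₃ (a.1+1) := by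
      intro a k; rw [hσ ⟨a, k⟩]
    have cast2 : ∀ (a : Fin (2*s)) (k : Fin (mlt j s d₁ d₂ d₃ (a.1+1))),
        mlt j s d₁ d₂ d₃ ((σ.symm ⟨a, k⟩).1.1+1) = mlt j s d₁ d₂ d₃ (a.1+1) := by
      intro a k; rw [hσ' ⟨a, k⟩]
    set g : ∀ a : Fin (2*s), Fin (mlt j s d₁ d₂ d₃ (a.1+1)) → Fin (mlt j s d₁ d₂ d₃ (a.1+1)) :=
      fun a k => Fin.cast (cast1 a k) ((σ ⟨a, k⟩).2) with hg
    set g' : ∀ a : Fin (2*s), Fin (mlt j s d₁ d₂ d₃ (a.1+1)) → Fin (mlt j s d₁ d₂ d₃ (a.1+1)) :=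
      fun a k => Fin.cast (cast2 a k) ((σ.symm ⟨a, k⟩).2) with hg'
    have key : ∀ (a : Fin (2*s)) (k : Fin (mlt j s d₁ d₂ d₃ (a.1+1))),
        (⟨a, g a k⟩ : Vtx j s d₁ d₂ d₃) = σ ⟨a, k⟩ := by
      intro a k
      refine Vtx.ext2 j s d₁ d₂ d₃ (hσ ⟨a, k⟩).symm ?_
      simp [hg, Fin.coe_cast]
    have key' : ∀ (a : Fin (2*s)) (k : Fin (mlt j s d₁ d₂ d₃ (a.1+1))),
        (⟨a, g' a k⟩ : Vtx j s d₁ d₂ d₃) = σ.symm ⟨a, k⟩ := by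
      intro a k
      refine Vtx.ext2 j s d₁ d₂ d₃ (hσ' ⟨a, k⟩).symm ?_
      simp [hg', Fin.coe_cast]
    have li : ∀ (a : Fin (2*s)) (k : Fin (mlt j s d₁ d₂ d₃ (a.1+1))), g' a (g a k) = k := by
      intro a k
      apply Fin.ext
      have : (g' a (g a k) : ℕ) = ((σ.symm ⟨a, g a k⟩).2 : ℕ) := by simp [hg', Fin.coe_cast]
      rw [this, key a k, Equiv.symm_apply_apply]
    have ri : ∀ (a : Fin (2*s)) (k : Fin (mlt j s d₁ d₂ d₃ (a.1+1))), g a (g' a k) = k := by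
      intro a k
      apply Fin.ext
      have : (g a (g' a k) : ℕ) = ((σ ⟨a, g' a k⟩).2 : ℕ) := by simp [hg, Fin.coe_cast]
      rw [this, key' a k, Equiv.apply_symm_apply]
    refine ⟨fun a => ⟨g a, g' a, li a, ri a⟩, ?_⟩
    apply Subtype.ext
    apply Equiv.ext
    rintro ⟨a, k⟩
    show (⟨a, g a k⟩ : Vtx j s d₁ d₂ d₃) = σ ⟨a, k⟩
    exact key a k

lemma card_aut (hj : 9 ≤ j) (hs : j + 14 ≤ s) (h1 : 1 ≤ d₁) (h12 : d₁ < d₂) (h23 : d₂ < d₃)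
    (h3 : d₃ + 1 ≤ s) :
    Nat.card (Gr j s d₁ d₂ d₃ ≃g Gr j s d₁ d₂ d₃) = (Nat.factorial j) * 8 := by
  classical
  have e1 := autEquivSub j s d₁ d₂ d₃ hj hs h1 h12 h23 h3
  have e2 := Equiv.ofBijective _ (Phi_bij j s d₁ d₂ d₃)
  rw [Nat.card_congr (e1.trans e2.symm)]
  rw [Nat.card_pi]
  have hterm : ∀ a : Fin (2*s),
      Nat.card (Equiv.Perm (Fin (mlt j s d₁ d₂ d₃ (a.1+1)))) =
        Nat.factorial (mlt j s d₁ d₂ d₃ (a.1+1)) := by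
    intro a
    rw [Nat.card_eq_fintype_card, Fintype.card_perm, Fintype.card_fin]
  rw [Finset.prod_congr rfl (fun a _ => hterm a)]
  -- to range, then to Ioc
  rw [Fin.prod_univ_eq_prod_range (fun i => Nat.factorial (mlt j s d₁ d₂ d₃ (i+1))) (2*s)]
  have hre : ∏ i ∈ Finset.range (2*s), Nat.factorial (mlt j s d₁ d₂ d₃ (i+1))
      = ∏ b ∈ Finset.Ioc 0 (2*s), Nat.factorial (mlt j s d₁ d₂ d₃ b) := by
    rw [Finset.prod_nbij' (i := fun i : ℕ => i + 1) (j := fun b : ℕ => b - 1)]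
    · intro a ha; simp only [Finset.mem_range] at ha; simp only [Finset.mem_Ioc]; omega
    · intro b hb; simp only [Finset.mem_Ioc] at hb; simp only [Finset.mem_range]; omega
    · intro a ha; omega
    · intro b hb; simp only [Finset.mem_Ioc] at hb; omega
    · intro a ha; rfl
  rw [hre]
  have hsub : ({s, d₁, d₂, d₃} : Finset ℕ) ⊆ Finset.Ioc 0 (2*s) := by
    intro b hb
    simp only [Finset.mem_insert, Finset.mem_singleton] at hb
    simp only [Finset.mem_Ioc]
    omega
  rw [← Finset.prod_subset hsub]
  · have hns : s ∉ ({d₁, d₂, d₃} : Finset ℕ) := by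
      simp only [Finset.mem_insert, Finset.mem_singleton]; omega
    have hn1 : d₁ ∉ ({d₂, d₃} : Finset ℕ) := by
      simp only [Finset.mem_insert, Finset.mem_singleton]; omega
    have hn2 : d₂ ∉ ({d₃} : Finset ℕ) := by
      simp only [Finset.mem_singleton]; omega
    rw [Finset.prod_insert hns, Finset.prod_insert hn1, Finset.prod_insert hn2,
      Finset.prod_singleton]
    have hms : mlt j s d₁ d₂ d₃ s = j := by
      unfold mlt
      rw [if_pos rfl, if_neg (by simpa using hns)]
      omega
    have hm1 : mlt j s d₁ d₂ d₃ d₁ = 2 := by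
      unfold mlt
      rw [if_neg (by omega), if_pos (by simp)]
    have hm2 : mlt j s d₁ d₂ d₃ d₂ = 2 := by
      unfold mlt
      rw [if_neg (by omega), if_pos (by simp)]
    have hm3 : mlt j s d₁ d₂ d₃ d₃ = 2 := by
      unfold mlt
      rw [if_neg (by omega), if_pos (by simp)]
    rw [hms, hm1, hm2, hm3]
    norm_num [Nat.factorial]
  · intro b hbIoc hbT
    simp only [Finset.mem_insert, Finset.mem_singleton] at hbT
    push_neg at hbT
    have : mlt j s d₁ d₂ d₃ b = 1 := by
      unfold mlt
      rw [if_neg hbT.1, if_neg (by simp only [Finset.mem_insert, Finset.mem_singleton]; tauto)]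
    rw [this]
    norm_num

section edges
variable (hj : 9 ≤ j) (hs : j + 14 ≤ s) (h1 : 1 ≤ d₁) (h12 : d₁ < d₂) (h23 : d₂ < d₃)
  (h3 : d₃ + 1 ≤ s)

lemma gauss (n : ℕ) : 2 * (∑ b ∈ Finset.Ioc 0 n, b) = n * (n+1) := by
  induction n with
  | zero => simp
  | succ n ih =>
    have : Finset.Ioc 0 (n+1) = Finset.Ioc 0 n ∪ Finset.Ioc n (n+1) := by
      rw [Finset.Ioc_union_Ioc_eq_Ioc (by omega) (by omega)]
    rw [this, Finset.sum_union, Nat.mul_add, ih]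
    · have : Finset.Ioc n (n+1) = {n+1} := by
        ext b; simp only [Finset.mem_Ioc, Finset.mem_singleton]; omega
      rw [this, Finset.sum_singleton]
      ring
    · rw [Finset.disjoint_left]
      intro b hb hb'
      simp only [Finset.mem_Ioc] at hb hb'
      omega

include hj hs h1 h12 h23 h3

lemma sum_degrees :
    ∑ x : Vtx j s d₁ d₂ d₃, (Gr j s d₁ d₂ d₃).degree x
      = 2 * (s*(s-1) + j*s + (d₁+d₂+d₃)) := by
  classical
  -- reduce to a weighted sum over weights
  have step1 : ∑ x : Vtx j s d₁ d₂ d₃, (Gr j s d₁ d₂ d₃).degree x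
      = ∑ b ∈ Finset.Ioc 0 (2*s), mlt j s d₁ d₂ d₃ b * Dfun j s d₁ d₂ d₃ b := by
    rw [Finset.sum_congr rfl (fun x _ => degree_eq j s d₁ d₂ d₃ hj hs h1 h12 h23 h3 x)]
    have h1' : (Finset.univ : Finset (Vtx j s d₁ d₂ d₃))
        = (Finset.univ : Finset (Fin (2*s))).sigma (fun _ => Finset.univ) :=
      (Finset.univ_sigma_univ).symm
    rw [h1', Finset.sum_sigma]
    simp only [Finset.sum_const, Finset.card_univ, Fintype.card_fin, smul_eq_mul]
    rw [Finset.sum_nbij' (i := fun a : Fin (2*s) => a.1+1)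
      (j := fun b : ℕ => (⟨min (b-1) (2*s-1), by omega⟩ : Fin (2*s)))]
    · intro a ha; simp only [Finset.mem_Ioc]; have := a.2; omega
    · intro b hb; exact Finset.mem_univ _
    · intro a ha
      have := a.2
      exact Fin.ext (by simp; omega)
    · intro b hb
      simp only [Finset.mem_Ioc] at hb
      show min (b-1) (2*s-1) + 1 = b
      omega
    · intro a ha; rfl
  rw [step1]
  -- split the sum at s-1, s
  have hsplit : Finset.Ioc 0 (2*s)
      = (Finset.Ioc 0 (s-1) ∪ Finset.Ioc (s-1) s) ∪ Finset.Ioc s (2*s) := by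
    rw [Finset.Ioc_union_Ioc_eq_Ioc (by omega) (by omega),
      Finset.Ioc_union_Ioc_eq_Ioc (by omega) (by omega)]
  have hdisj1 : Disjoint (Finset.Ioc 0 (s-1)) (Finset.Ioc (s-1) s) := by
    rw [Finset.disjoint_left]; intro b hb hb'
    simp only [Finset.mem_Ioc] at hb hb'; omega
  have hdisj2 : Disjoint (Finset.Ioc 0 (s-1) ∪ Finset.Ioc (s-1) s) (Finset.Ioc s (2*s)) := by
    rw [Finset.disjoint_left]; intro b hb hb'
    simp only [Finset.mem_union, Finset.mem_Ioc] at hb hb'; omega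
  rw [hsplit, Finset.sum_union hdisj2, Finset.sum_union hdisj1]
  have hsingle : Finset.Ioc (s-1) s = {s} := by
    ext b; simp only [Finset.mem_Ioc, Finset.mem_singleton]; omega
  -- middle term
  have hmids : mlt j s d₁ d₂ d₃ s = j := by
    unfold mlt
    rw [if_pos rfl, if_neg (by simp only [Finset.mem_insert, Finset.mem_singleton]; omega)]
    omega
  have hmid : ∑ b ∈ Finset.Ioc (s-1) s, mlt j s d₁ d₂ d₃ b * Dfun j s d₁ d₂ d₃ b
      = j * s := by
    rw [hsingle, Finset.sum_singleton, hmids, Dfun_mid j s d₁ d₂ d₃ hj hs h1 h12 h23 h3]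
  -- low range
  have hlow : ∑ b ∈ Finset.Ioc 0 (s-1), mlt j s d₁ d₂ d₃ b * Dfun j s d₁ d₂ d₃ b
      = (∑ b ∈ Finset.Ioc 0 (s-1), b) + (d₁+d₂+d₃) := by
    have congr1 : ∀ b ∈ Finset.Ioc 0 (s-1),
        mlt j s d₁ d₂ d₃ b * Dfun j s d₁ d₂ d₃ b
          = b + (if b ∈ ({d₁, d₂, d₃} : Finset ℕ) then b else 0) := by
      intro b hb
      simp only [Finset.mem_Ioc] at hb
      rw [Dfun_low j s d₁ d₂ d₃ hj hs h1 h12 h23 h3 (by omega) (by omega)]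
      unfold mlt
      rw [if_neg (by omega)]
      split
      · ring
      · ring
    rw [Finset.sum_congr rfl congr1, Finset.sum_add_distrib]
    congr 1
    rw [Finset.sum_ite_mem]
    have : Finset.Ioc 0 (s-1) ∩ ({d₁, d₂, d₃} : Finset ℕ) = ({d₁, d₂, d₃} : Finset ℕ) := by
      rw [Finset.inter_eq_right]
      intro b hb
      simp only [Finset.mem_insert, Finset.mem_singleton] at hb
      simp only [Finset.mem_Ioc]
      omega
    rw [this, Finset.sum_insert (by simp only [Finset.mem_insert, Finset.mem_singleton]; omega),
      Finset.sum_insert (by simp only [Finset.mem_singleton]; omega), Finset.sum_singleton]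
    omega
  -- high range
  have hhigh : ∑ b ∈ Finset.Ioc s (2*s), mlt j s d₁ d₂ d₃ b * Dfun j s d₁ d₂ d₃ b
      = (∑ b ∈ Finset.Ioc s (2*s), b) + s * (j-2) + (d₁+d₂+d₃) := by
    have congr2 : ∀ b ∈ Finset.Ioc s (2*s),
        mlt j s d₁ d₂ d₃ b * Dfun j s d₁ d₂ d₃ b
          = (b + (j-2)) + #(({d₁, d₂, d₃} : Finset ℕ).filter (fun d => 2*s - b < d)) := by
      intro b hb
      simp only [Finset.mem_Ioc] at hb
      have hm : mlt j s d₁ d₂ d₃ b = 1 := by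
        unfold mlt
        rw [if_neg (by omega),
          if_neg (by simp only [Finset.mem_insert, Finset.mem_singleton]; omega)]
      rw [hm, one_mul, Dfun_high j s d₁ d₂ d₃ hj hs h1 h12 h23 h3 (by omega) (by omega)]
      omega
    rw [Finset.sum_congr rfl congr2, Finset.sum_add_distrib, Finset.sum_add_distrib]
    congr 1
    · rw [Finset.sum_const, Nat.card_Ioc, smul_eq_mul]
      have : 2*s - s = s := by omega
      rw [this]
    · -- double counting
      have swap : ∀ b ∈ Finset.Ioc s (2*s),
          #(({d₁, d₂, d₃} : Finset ℕ).filter (fun d => 2*s - b < d))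
            = ∑ d ∈ ({d₁, d₂, d₃} : Finset ℕ), (if 2*s - b < d then 1 else 0) := by
        intro b _
        rw [Finset.card_filter]
      rw [Finset.sum_congr rfl swap, Finset.sum_comm]
      have inner : ∀ d ∈ ({d₁, d₂, d₃} : Finset ℕ),
          ∑ b ∈ Finset.Ioc s (2*s), (if 2*s - b < d then 1 else 0) = d := by
        intro d hd
        simp only [Finset.mem_insert, Finset.mem_singleton] at hd
        rw [← Finset.card_filter]
        have : (Finset.Ioc s (2*s)).filter (fun b => 2*s - b < d)
            = Finset.Ioc (2*s - d) (2*s) := by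
          ext b
          simp only [Finset.mem_filter, Finset.mem_Ioc]
          omega
        rw [this, Nat.card_Ioc]
        omega
      rw [Finset.sum_congr rfl inner,
        Finset.sum_insert (by simp only [Finset.mem_insert, Finset.mem_singleton]; omega),
        Finset.sum_insert (by simp only [Finset.mem_singleton]; omega), Finset.sum_singleton]
      omega
  rw [hlow, hmid, hhigh]
  -- Gauss identities
  have hg1 := gauss (s-1)
  have hg0 := gauss (2*s)
  have hgs : (∑ b ∈ Finset.Ioc 0 (s-1), b) + s + (∑ b ∈ Finset.Ioc s (2*s), b)
      = ∑ b ∈ Finset.Ioc 0 (2*s), b := by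
    rw [hsplit, Finset.sum_union hdisj2, Finset.sum_union hdisj1, hsingle,
      Finset.sum_singleton]
  have e1 : s - 1 + 1 = s := by omega
  rw [e1] at hg1
  zify [show 2 ≤ j by omega, show 1 ≤ s by omega] at *
  nlinarith [hg1, hg0, hgs]

lemma card_edges :
    Nat.card (Gr j s d₁ d₂ d₃).edgeSet = s*(s-1) + j*s + (d₁+d₂+d₃) := by
  classical
  have h2 := SimpleGraph.sum_degrees_eq_twice_card_edges (Gr j s d₁ d₂ d₃)
  rw [sum_degrees j s d₁ d₂ d₃ hj hs h1 h12 h23 h3] at h2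
  have : Nat.card (Gr j s d₁ d₂ d₃).edgeSet = #(Gr j s d₁ d₂ d₃).edgeFinset := by
    rw [Nat.card_coe_set_eq, Set.ncard_eq_toFinset_card']
    congr 1
  omega

end edges

/-! ### parameter selection -/

def baseF (j t : ℕ) : ℕ := (2*t + j + 2) + (t*(t-1) + j*t)

lemma fact_big : ∀ n, 9 ≤ n → baseF n (n+14) + 6 ≤ 8 * Nat.factorial (n-1) := by
  intro n hn
  induction n, hn using Nat.le_induction with
  | base => norm_num [baseF, Nat.factorial]
  | succ n hn ih =>
    have hfs : Nat.factorial n = n * Nat.factorial (n-1) := by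
      obtain ⟨m, rfl⟩ : ∃ m, n = m + 1 := ⟨n - 1, by omega⟩
      simp [Nat.factorial_succ]
    have h1 : n + 1 - 1 = n := by omega
    rw [h1, hfs]
    unfold baseF at ih ⊢
    have e1 : n + 14 - 1 = n + 13 := by omega
    have e2 : n + 1 + 14 - 1 = n + 14 := by omega
    rw [e1] at ih
    rw [e2]
    nlinarith [ih, Nat.one_le_iff_ne_zero.mpr (Nat.factorial_ne_zero (n-1))]

lemma fact_pred (j : ℕ) (h : 1 ≤ j) : Nat.factorial j = j * Nat.factorial (j-1) := by
  obtain ⟨m, rfl⟩ : ∃ m, j = m + 1 := ⟨j - 1, by omega⟩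
  simp [Nat.factorial_succ]

lemma baseF_step (j t : ℕ) (ht : 1 ≤ t) : baseF j (t+1) = baseF j t + (2*t + j + 2) := by
  unfold baseF
  zify [show 1 ≤ t from ht, show 1 ≤ t + 1 by omega]
  ring

lemma baseF_ge (j t : ℕ) : t ≤ baseF j t := by
  unfold baseF
  have h1 : t ≤ 2*t + j + 2 := by omega
  exact le_trans h1 (Nat.le_add_right _ _)

lemma select (p q : ℕ) (hp : 1 ≤ p) (hq : 1 ≤ q) :
    ∃ j s d₁ d₂ d₃ : ℕ, 9 ≤ j ∧ j + 14 ≤ s ∧ 1 ≤ d₁ ∧ d₁ < d₂ ∧ d₂ < d₃ ∧ d₃ + 1 ≤ s ∧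
      p ∣ Nat.factorial j ∧
      (2*s + j + 2) + (s*(s-1) + (j*s + (d₁+d₂+d₃))) = 8 * (Nat.factorial j / p) * q := by
  classical
  obtain ⟨j, hj9, hpj⟩ : ∃ j, 9 ≤ j ∧ p ≤ j := ⟨max p 9, le_max_right _ _, le_max_left _ _⟩
  have hdvd : p ∣ Nat.factorial j := Nat.dvd_factorial hp hpj
  obtain ⟨D, hDdef⟩ : ∃ D, D = 8 * (Nat.factorial j / p) * q := ⟨_, rfl⟩
  -- D is large
  have hDge : 8 * Nat.factorial (j-1) ≤ D := by
    have h1 : Nat.factorial j / j = Nat.factorial (j-1) := by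
      rw [fact_pred j (by omega), Nat.mul_div_cancel_left _ (by omega : 0 < j)]
    have h2 : Nat.factorial j / j ≤ Nat.factorial j / p :=
      Nat.div_le_div_left hpj (by omega)
    rw [hDdef]
    calc 8 * Nat.factorial (j-1) = 8 * (Nat.factorial j / j) * 1 := by rw [h1, mul_one]
      _ ≤ 8 * (Nat.factorial j / p) * q := by
          apply Nat.mul_le_mul _ hq
          exact Nat.mul_le_mul_left _ h2
  have hP14 : baseF j (j+14) + 6 ≤ D := le_trans (fact_big j hj9) hDge
  have hb14 : j + 14 ≤ D := le_trans (le_trans (baseF_ge j (j+14)) (by omega)) hP14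
  obtain ⟨s, hsdef⟩ : ∃ s, s = Nat.findGreatest (fun t => baseF j t + 6 ≤ D) D := ⟨_, rfl⟩
  have hs14 : j + 14 ≤ s := by
    rw [hsdef]
    exact Nat.le_findGreatest hb14 hP14
  have hPs : baseF j s + 6 ≤ D := by
    rw [hsdef]
    exact Nat.findGreatest_spec (P := fun t => baseF j t + 6 ≤ D) hb14 hP14
  have hsD : s + 6 ≤ D := le_trans (by have := baseF_ge j s; omega) hPs
  have hnot : ¬ (baseF j (s+1) + 6 ≤ D) := by
    have h5 : Nat.findGreatest (fun t => baseF j t + 6 ≤ D) D < s + 1 := by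
      rw [← hsdef]
      omega
    have h6 := Nat.findGreatest_is_greatest (P := fun t => baseF j t + 6 ≤ D) (n := D)
      (k := s+1) h5 (by omega)
    simpa using h6
  rw [baseF_step j s (by omega)] at hnot
  obtain ⟨R, hRdef⟩ : ∃ R, R = D - baseF j s := ⟨_, rfl⟩
  have hR6 : 6 ≤ R := by omega
  have hRle : R ≤ 2*s + j + 7 := by omega
  have hRle' : R ≤ 3*s - 6 := by omega
  have hs23 : 23 ≤ s := by omega
  -- choose the three doubled weights
  have hsel : ∃ d₁ d₂ d₃, 1 ≤ d₁ ∧ d₁ < d₂ ∧ d₂ < d₃ ∧ d₃ + 1 ≤ s ∧ d₁ + d₂ + d₃ = R := by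
    rcases le_or_gt R (s+2) with hc1 | hc1
    · exact ⟨1, 2, R - 3, by omega, by omega, by omega, by omega, by omega⟩
    · rcases le_or_gt R (2*s-2) with hc2 | hc2
      · exact ⟨1, R - s, s - 1, by omega, by omega, by omega, by omega, by omega⟩
      · exact ⟨R + 3 - 2*s, s - 2, s - 1, by omega, by omega, by omega, by omega, by omega⟩
  obtain ⟨d₁, d₂, d₃, h1, h12, h23, h3, hsum⟩ := hsel
  refine ⟨j, s, d₁, d₂, d₃, hj9, hs14, h1, h12, h23, h3, hdvd, ?_⟩
  have hexp : (2*s + j + 2) + (s*(s-1) + (j*s + (d₁+d₂+d₃))) = baseF j s + R := by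
    rw [← hsum]
    unfold baseF
    ring
  rw [hexp, ← hDdef]
  omega

end AutRatio

/-- For every positive rational `r`, there is a finite simple graph `Γ = (V, E)`
with `|Aut Γ| / (|V| + |E|) = r`. -/
theorem exists_graph_aut_card_div_vertex_add_edge_card_eq (r : ℚ) (hr : 0 < r) :
    ∃ (V : Type) (G : SimpleGraph V), Finite V ∧
      (Nat.card (G ≃g G) : ℚ) / ((Nat.card V : ℚ) + (Nat.card G.edgeSet : ℚ)) = r := by
  classical
  set p := r.num.toNat with hpdef
  set q := r.den with hqdef
  have hnum : 0 < r.num := Rat.num_pos.mpr hr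
  have hpz : (p : ℤ) = r.num := Int.toNat_of_nonneg (le_of_lt hnum)
  have hp : 1 ≤ p := by omega
  have hq : 1 ≤ q := r.den_pos
  obtain ⟨j, s, d₁, d₂, d₃, hj, hs, h1, h12, h23, h3, hdvd, heq⟩ := AutRatio.select p q hp hq
  refine ⟨AutRatio.Vtx j s d₁ d₂ d₃, AutRatio.Gr j s d₁ d₂ d₃, inferInstance, ?_⟩
  have hN := AutRatio.card_aut j s d₁ d₂ d₃ hj hs h1 h12 h23 h3
  have hV : Nat.card (AutRatio.Vtx j s d₁ d₂ d₃) = 2*s + j + 2 := by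
    rw [Nat.card_eq_fintype_card, AutRatio.card_Vtx j s d₁ d₂ d₃ hj hs h1 h12 h23 h3]
  have hE := AutRatio.card_edges j s d₁ d₂ d₃ hj hs h1 h12 h23 h3
  rw [hN, hV, hE]
  have hsum : (2*s + j + 2) + (s*(s-1) + j*s + (d₁+d₂+d₃))
      = 8 * (Nat.factorial j / p) * q := by
    rw [← heq]; ring
  rw [← Nat.cast_add, hsum]
  -- denominators nonzero
  have hfpos : 1 ≤ Nat.factorial j / p :=
    Nat.one_le_div_iff (by omega) |>.mpr (Nat.le_of_dvd (Nat.factorial_pos j) hdvd)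
  have hD1 : 0 < 8 * (Nat.factorial j / p) * q :=
    Nat.mul_pos (Nat.mul_pos (by norm_num) hfpos) hq
  have hD0 : ((8 * (Nat.factorial j / p) * q : ℕ) : ℚ) ≠ 0 :=
    Nat.cast_ne_zero.mpr (by omega)
  have hq0 : ((q : ℕ) : ℚ) ≠ 0 := Nat.cast_ne_zero.mpr (by omega)
  have hkey : (Nat.factorial j * 8) * q = p * (8 * (Nat.factorial j / p) * q) := by
    conv_lhs => rw [← Nat.div_mul_cancel hdvd]
    ring
  have hrpq : r = (p : ℚ) / (q : ℚ) := by
    rw [← Rat.num_div_den r, ← hpz]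
    norm_cast
  rw [hrpq, div_eq_div_iff hD0 hq0]
  exact_mod_cast congrArg (fun n : ℕ => (n : ℚ)) hkey
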